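/- Let I = (Σ, D, M) be a Strands instance with grid M ∈ Σ^{n×m} such that, if I is solvable, then I is solvable without diagonal moves. Define the 4-coloring c(i, j) ∈ {1, 2, 3, 4} of grid cells by the parities of i and j (c = 1 if i, j both even; c = 2 if i even, j odd; c = 3 if i odd, j even; c = 4 if i, j both odd), and let P₁ = {2,3}, P₂ = {1,4}, P₃ = {1,4}, P₄ = {2,3}. Assume Σ ∩ {1,2,3,4} = ∅ and define I₂ = (Σ ∪ {1,2,3,4}, D₂, M₂), where M₂ ∈ (Σ ∪ {1,2,3,4})^{3n×3m} is obtained by replacing each cell (i, j) of M by the 3×3 block whose center is M(i, j) and whose eight perimeter cells all carry c(i, j), and where, writing Wᵢ(τ) for the 9-character string i i i i i i τ i i and Gₖ for the set of strings g ∈ {1,2,3,4}ᵏ with g_{t+1} ∈ P_{g_t} for all t, D₂ = { W_{g₁}(w₁) ∘ W_{g₂}(w₂) ∘ ⋯ ∘ W_{gₖ}(wₖ) : w = w₁⋯wₖ ∈ D, g ∈ Gₖ }. Then I₂ is solvable if and only if I is solvable; moreover, if I₂ is solvable then I₂ is solvable without diagonal moves. -/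

import Mathlib

/-!
Strands: a grid `M : Fin n → Fin m → A` over an alphabet `A` and a dictionary
`D : Set (List A)`.  A placement of a word `w` is a list of pairwise distinct cells,
consecutive cells adjacent, spelling `w`; the instance is solvable if the cells of the
grid can be partitioned into placements of dictionary words.
-/

/-- King adjacency of grid cells (horizontal, vertical or diagonal neighbours). -/
def KingAdj {n m : ℕ} (c d : Fin n × Fin m) : Prop :=
  c ≠ d ∧ ((c.1 : ℤ) - (d.1 : ℤ)).natAbs ≤ 1 ∧ ((c.2 : ℤ) - (d.2 : ℤ)).natAbs ≤ 1

/-- Orthogonal adjacency of grid cells (horizontal or vertical neighbours only). -/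
def OrthAdj {n m : ℕ} (c d : Fin n × Fin m) : Prop :=
  ((c.1 : ℤ) - (d.1 : ℤ)).natAbs + ((c.2 : ℤ) - (d.2 : ℤ)).natAbs = 1

/-- `cs` is a placement of the word `w` in the grid `M`, with respect to the adjacency
relation `adj`: its cells are pairwise distinct, consecutive cells are adjacent, and the
cells spell out `w`. -/
def IsPlacement {n m : ℕ} {A : Type} (adj : (Fin n × Fin m) → (Fin n × Fin m) → Prop)
    (M : Fin n → Fin m → A) (w : List A) (cs : List (Fin n × Fin m)) : Prop :=
  cs.Nodup ∧ cs.Chain' adj ∧ cs.map (fun c => M c.1 c.2) = w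

/-- The Strands instance `(A, D, M)` is solvable (with respect to the adjacency
relation `adj`): the cells of the grid can be partitioned into placements of words
from `D`. -/
def StrandsSolvable {n m : ℕ} {A : Type}
    (adj : (Fin n × Fin m) → (Fin n × Fin m) → Prop)
    (M : Fin n → Fin m → A) (D : Set (List A)) : Prop :=
  ∃ P : List (List (Fin n × Fin m)),
    (∀ cs ∈ P, ∃ w ∈ D, IsPlacement adj M w cs) ∧
    P.flatten.Nodup ∧ (∀ c : Fin n × Fin m, c ∈ P.flatten)

/-- The 4-colouring of grid cells by the parities of the coordinates:
`0,1,2,3` stand for the colours `1,2,3,4` of the paper. -/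
def cellColor (i j : ℕ) : Fin 4 :=
  if i % 2 = 0 then (if j % 2 = 0 then 0 else 1) else (if j % 2 = 0 then 2 else 3)

/-- The colours reachable from a given colour: `P₁ = {2,3}`, `P₂ = {1,4}`,
`P₃ = {1,4}`, `P₄ = {2,3}`. -/
def colorNext : Fin 4 → Finset (Fin 4) := ![{1, 2}, {0, 3}, {0, 3}, {1, 2}]

/-- The blown-up grid `M₂ ∈ (Σ ∪ {1,2,3,4})^{3n×3m}`: each cell `(i, j)` of `M` is
replaced by a `3×3` block whose centre carries `M i j` and whose perimeter carries the
colour `c(i, j)`. -/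
def blowupGrid {n m : ℕ} {A : Type} (M : Fin n → Fin m → A)
    (r : Fin (3 * n)) (c : Fin (3 * m)) : A ⊕ Fin 4 :=
  if (r : ℕ) % 3 = 1 ∧ (c : ℕ) % 3 = 1 then
    Sum.inl (M ⟨(r : ℕ) / 3, by omega⟩ ⟨(c : ℕ) / 3, by omega⟩)
  else Sum.inr (cellColor ((r : ℕ) / 3) ((c : ℕ) / 3))

/-- The 9-character string `W_g(τ) = g g g g g g τ g g`. -/
def blowupW {A : Type} (g : Fin 4) (τ : A) : List (A ⊕ Fin 4) :=
  [Sum.inr g, Sum.inr g, Sum.inr g, Sum.inr g, Sum.inr g, Sum.inr g,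
   Sum.inl τ, Sum.inr g, Sum.inr g]

/-- The blown-up dictionary
`D₂ = {W_{g₁}(w₁) ∘ ⋯ ∘ W_{gₖ}(wₖ) : w ∈ D, g ∈ G_{|w|}}`. -/
def blowupDict {A : Type} (D : Set (List A)) : Set (List (A ⊕ Fin 4)) :=
  {u | ∃ w ∈ D, ∃ g : List (Fin 4), g.length = w.length ∧
    g.Chain' (fun a b => b ∈ colorNext a) ∧ u = (List.zipWith blowupW g w).flatten}

namespace SB

variable {n m : ℕ} {A : Type}

def toBlock (c : Fin (3*n) × Fin (3*m)) : Fin n × Fin m :=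
  (⟨(c.1:ℕ)/3, by have := c.1.isLt; omega⟩, ⟨(c.2:ℕ)/3, by have := c.2.isLt; omega⟩)

def centerOf (b : Fin n × Fin m) : Fin (3*n) × Fin (3*m) :=
  (⟨3*(b.1:ℕ)+1, by have := b.1.isLt; omega⟩, ⟨3*(b.2:ℕ)+1, by have := b.2.isLt; omega⟩)

def isCenter (c : Fin (3*n) × Fin (3*m)) : Bool :=
  ((c.1:ℕ)%3 == 1) && ((c.2:ℕ)%3 == 1)

lemma centerOf_injective : Function.Injective (centerOf (n := n) (m := m)) := by
  intro a b h
  simp only [centerOf, Prod.ext_iff, Fin.ext_iff] at h ⊢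
  omega

lemma isCenter_centerOf (b : Fin n × Fin m) : isCenter (centerOf b) = true := by
  simp [isCenter, centerOf, Nat.add_mul_mod_self_left]

lemma toBlock_centerOf (b : Fin n × Fin m) : toBlock (centerOf b) = b := by
  simp only [toBlock, centerOf, Prod.ext_iff, Fin.ext_iff]
  omega

lemma cellColor_eq_iff {i j i' j' : ℕ} :
    cellColor i j = cellColor i' j' ↔ (i % 2 = i' % 2 ∧ j % 2 = j' % 2) := by
  have hi : i % 2 = 0 ∨ i % 2 = 1 := by omega
  have hj : j % 2 = 0 ∨ j % 2 = 1 := by omega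
  have hi' : i' % 2 = 0 ∨ i' % 2 = 1 := by omega
  have hj' : j' % 2 = 0 ∨ j' % 2 = 1 := by omega
  unfold cellColor
  rcases hi with hi | hi <;> rcases hj with hj | hj <;>
    rcases hi' with hi' | hi' <;> rcases hj' with hj' | hj' <;>
    simp [hi, hj, hi', hj']

lemma mem_colorNext_ne {a b : Fin 4} (h : b ∈ colorNext a) : a ≠ b := by
  revert h; revert a b; decide

variable {M : Fin n → Fin m → A}

lemma inr_elim {c : Fin (3*n) × Fin (3*m)} {x : Fin 4}
    (h : blowupGrid M c.1 c.2 = Sum.inr x) :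
    isCenter c = false ∧ x = cellColor ((toBlock c).1 : ℕ) ((toBlock c).2 : ℕ) := by
  unfold blowupGrid at h
  split at h
  · simp at h
  · rename_i hc
    simp only [Sum.inr.injEq] at h
    refine ⟨?_, ?_⟩
    · simp only [isCenter, Bool.and_eq_false_iff, beq_eq_false_iff_ne, ne_eq]
      omega
    · rw [← h]; rfl

lemma inl_elim {c : Fin (3*n) × Fin (3*m)} {a : A}
    (h : blowupGrid M c.1 c.2 = Sum.inl a) :
    (c.1:ℕ) % 3 = 1 ∧ (c.2:ℕ) % 3 = 1 ∧ M (toBlock c).1 (toBlock c).2 = a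
      ∧ c = centerOf (toBlock c) := by
  unfold blowupGrid at h
  split at h
  · rename_i hc
    simp only [Sum.inl.injEq] at h
    refine ⟨hc.1, hc.2, h, ?_⟩
    simp only [centerOf, toBlock, Prod.ext_iff, Fin.ext_iff]
    omega
  · simp at h

lemma king_center {c d : Fin (3*n) × Fin (3*m)} (h : KingAdj c d)
    (hc1 : (c.1:ℕ) % 3 = 1) (hc2 : (c.2:ℕ) % 3 = 1) : toBlock d = toBlock c := by
  obtain ⟨-, h1, h2⟩ := h
  simp only [toBlock, Prod.ext_iff, Fin.ext_iff]
  omega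

lemma king_same_color {c d : Fin (3*n) × Fin (3*m)} {x : Fin 4} (h : KingAdj c d)
    (hc : blowupGrid M c.1 c.2 = Sum.inr x) (hd : blowupGrid M d.1 d.2 = Sum.inr x) :
    toBlock c = toBlock d := by
  obtain ⟨-, h1, h2⟩ := h
  obtain ⟨-, hc2⟩ := inr_elim hc
  obtain ⟨-, hd2⟩ := inr_elim hd
  have := cellColor_eq_iff.mp (hc2 ▸ hd2)
  simp only [toBlock, Prod.ext_iff, Fin.ext_iff] at this ⊢
  omega

lemma king_blocks {c d : Fin (3*n) × Fin (3*m)} (h : KingAdj c d) :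
    (((toBlock c).1 : ℤ) - ((toBlock d).1 : ℤ)).natAbs ≤ 1 ∧
    (((toBlock c).2 : ℤ) - ((toBlock d).2 : ℤ)).natAbs ≤ 1 := by
  obtain ⟨-, h1, h2⟩ := h
  constructor <;> · simp only [toBlock, Fin.val_mk]; omega



lemma kingAdj_symm {c d : Fin n × Fin m} (h : KingAdj c d) : KingAdj d c := by
  obtain ⟨h0, h1, h2⟩ := h
  exact ⟨Ne.symm h0, by omega, by omega⟩

lemma chunk {g : Fin 4} {τ : A} {cs : List (Fin (3*n) × Fin (3*m))}
    (hsp : cs.map (fun c => blowupGrid M c.1 c.2) = blowupW g τ)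
    (hch : cs.Chain' KingAdj) :
    ∃ B : Fin n × Fin m, cellColor (B.1:ℕ) (B.2:ℕ) = g ∧ M B.1 B.2 = τ ∧
      (∀ c ∈ cs, toBlock c = B) ∧ cs.filter isCenter = [centerOf B] ∧ cs ≠ [] := by
  have hl : cs.length = 9 := by rw [← List.length_map (as := cs) (fun c => blowupGrid M c.1 c.2), hsp]; rfl
  match cs, hl, hsp with
  | [c0,c1,c2,c3,c4,c5,c6,c7,c8], _, hsp =>
  simp only [List.map_cons, List.map_nil, blowupW, List.cons.injEq, and_true] at hsp
  obtain ⟨h0,h1,h2,h3,h4,h5,h6,h7,h8⟩ := hsp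
  simp only [List.Chain', List.isChain_cons_cons, List.isChain_singleton, and_true] at hch
  obtain ⟨a01,a12,a23,a34,a45,a56,a67,a78⟩ := hch
  obtain ⟨m1, m2, hM, hcen⟩ := inl_elim h6
  refine ⟨toBlock c6, ?_, hM, ?_, ?_, by simp⟩
  case _ =>
    have t5 : toBlock c5 = toBlock c6 := king_center (kingAdj_symm a56) m1 m2
    have := (inr_elim h5).2
    rw [t5] at this
    exact this.symm
  case _ =>
    have t5 : toBlock c5 = toBlock c6 := king_center (kingAdj_symm a56) m1 m2
    have t7 : toBlock c7 = toBlock c6 := king_center a67 m1 m2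
    have t8 : toBlock c8 = toBlock c6 := (king_same_color a78 h7 h8).symm.trans t7
    have t4 : toBlock c4 = toBlock c6 := (king_same_color a45 h4 h5).trans t5
    have t3 : toBlock c3 = toBlock c6 := (king_same_color a34 h3 h4).trans t4
    have t2 : toBlock c2 = toBlock c6 := (king_same_color a23 h2 h3).trans t3
    have t1 : toBlock c1 = toBlock c6 := (king_same_color a12 h1 h2).trans t2
    have t0 : toBlock c0 = toBlock c6 := (king_same_color a01 h0 h1).trans t1
    intro c hc
    simp only [List.mem_cons, List.not_mem_nil, or_false] at hc
    rcases hc with rfl|rfl|rfl|rfl|rfl|rfl|rfl|rfl|rfl <;>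
      first | rfl | assumption
  case _ =>
    have e0 := (inr_elim h0).1
    have e1 := (inr_elim h1).1
    have e2 := (inr_elim h2).1
    have e3 := (inr_elim h3).1
    have e4 := (inr_elim h4).1
    have e5 := (inr_elim h5).1
    have e7 := (inr_elim h7).1
    have e8 := (inr_elim h8).1
    have e6 : isCenter c6 = true := by rw [hcen]; exact isCenter_centerOf _
    simp [List.filter, e0,e1,e2,e3,e4,e5,e6,e7,e8, ← hcen]

lemma fwd_aux : ∀ (g : List (Fin 4)) (w : List A) (cs : List (Fin (3*n) × Fin (3*m))),
    g.length = w.length → g.Chain' (fun a b => b ∈ colorNext a) →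
    cs.map (fun c => blowupGrid M c.1 c.2) = (List.zipWith blowupW g w).flatten →
    cs.Chain' KingAdj →
    ∃ bs : List (Fin n × Fin m),
      bs.Chain' KingAdj ∧
      bs.map (fun b => M b.1 b.2) = w ∧
      bs.map (fun b => cellColor (b.1:ℕ) (b.2:ℕ)) = g ∧
      cs.filter isCenter = bs.map centerOf ∧
      (∀ c ∈ cs.head?, bs.head? = some (toBlock c))
  | [], w, cs, hlen, _, hsp, _ => by
    have hw : w = [] := by
      cases w with
      | nil => rfl
      | cons a t => simp at hlen
    subst hw
    have : cs = [] := by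
      have := hsp
      simp only [List.zipWith_nil_left, List.flatten_nil, List.map_eq_nil_iff] at this
      exact this
    subst this
    exact ⟨[], List.isChain_nil, by simp, by simp, by simp, by simp⟩
  | gh :: gt, w, cs, hlen, hgch, hsp, hch => by
    cases w with
    | nil => simp at hlen
    | cons τ wt =>
    simp only [List.zipWith_cons_cons, List.flatten_cons] at hsp
    have hcs : cs = cs.take 9 ++ cs.drop 9 := (List.take_append_drop 9 cs).symm
    have hm1 : (cs.take 9).map (fun c => blowupGrid M c.1 c.2) = blowupW gh τ := by
      rw [List.map_take, hsp]
      simp [blowupW]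
    have hm2 : (cs.drop 9).map (fun c => blowupGrid M c.1 c.2)
        = (List.zipWith blowupW gt wt).flatten := by
      rw [List.map_drop, hsp]
      simp [blowupW]
    rw [hcs] at hch
    unfold List.Chain' at hch
    rw [List.isChain_append] at hch
    obtain ⟨hch1, hch2, hlink⟩ := hch
    obtain ⟨B, hcol, hMB, hmem, hfilt, hne⟩ := chunk hm1 hch1
    obtain ⟨bs', ibch, ibM, ibcol, ibfilt, ibhead⟩ :=
      fwd_aux gt wt (cs.drop 9) (by simpa using hlen) (hgch.tail) hm2 hch2
    refine ⟨B :: bs', ?_, by simp [hMB, ibM], by simp [hcol, ibcol], ?_, ?_⟩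
    · unfold List.Chain'
      rw [List.isChain_cons]
      refine ⟨?_, ibch⟩
      intro b' hb'
      have hbs' : bs' ≠ [] := by
        intro h; rw [h] at hb'; simp at hb'
      have hcs2 : cs.drop 9 ≠ [] := by
        intro h
        rw [h] at ibfilt
        simp only [List.filter_nil] at ibfilt
        exact hbs' (by simpa using ibfilt.symm)
      obtain ⟨c', t', hct⟩ := List.exists_cons_of_ne_nil hcs2
      have hc'h : c' ∈ (cs.drop 9).head? := by rw [hct]; rfl
      have hb'B : bs'.head? = some (toBlock c') := ibhead c' hc'h
      rw [hb'B] at hb'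
      simp only [Option.mem_def, Option.some.injEq] at hb'
      subst hb'
      -- color of toBlock c'
      have hgt : gt.head? = some (cellColor ((toBlock c').1:ℕ) ((toBlock c').2:ℕ)) := by
        rw [← ibcol, List.head?_map, hb'B]
        rfl
      have hnext : cellColor ((toBlock c').1:ℕ) ((toBlock c').2:ℕ) ∈ colorNext gh := by
        have := List.isChain_cons.mp hgch
        exact this.1 _ hgt
      have hneq : B ≠ toBlock c' := by
        intro h
        have := mem_colorNext_ne hnext
        rw [← h, hcol] at this
        exact this rfl
      -- adjacency
      obtain ⟨x, t1, hx⟩ := List.exists_cons_of_ne_nil hne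
      have hlast : ∃ y, (cs.take 9).getLast? = some y := by
        rw [hx]; exact ⟨(x :: t1).getLast (by simp), List.getLast?_eq_getLast _⟩
      obtain ⟨y, hy⟩ := hlast
      have hyk := hlink y hy c' hc'h
      have hyB : toBlock y = B := hmem y (List.mem_of_mem_getLast? hy)
      have := king_blocks hyk
      rw [hyB] at this
      exact ⟨hneq, this.1, this.2⟩
    · rw [hcs, List.filter_append, hfilt, ibfilt]
      simp
    · obtain ⟨x, t1, hx⟩ := List.exists_cons_of_ne_nil hne
      intro c hc
      rw [hcs, hx] at hc
      simp only [List.cons_append, List.head?_cons, Option.mem_def, Option.some.injEq] at hc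
      subst hc
      have hxB : toBlock x = B := hmem x (by rw [hx]; exact List.mem_cons_self)
      rw [List.head?_cons, hxB]

lemma exists_forall₂ {α β : Type*} {Φ : α → β → Prop} :
    ∀ l : List α, (∀ x ∈ l, ∃ y, Φ x y) → ∃ l' : List β, List.Forall₂ Φ l l'
  | [], _ => ⟨[], List.Forall₂.nil⟩
  | x :: t, h => by
    obtain ⟨y, hy⟩ := h x (List.mem_cons_self)
    obtain ⟨l', hl'⟩ := exists_forall₂ t (fun z hz => h z (List.mem_cons_of_mem _ hz))
    exact ⟨y :: l', List.Forall₂.cons hy hl'⟩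

lemma forall₂_mem {α β : Type*} {Φ : α → β → Prop} {l : List α} {l' : List β}
    (h : List.Forall₂ Φ l l') : ∀ y ∈ l', ∃ x ∈ l, Φ x y := by
  induction h with
  | nil => simp
  | cons h _ ih =>
    intro y hy
    rcases List.mem_cons.mp hy with rfl | hy
    · exact ⟨_, List.mem_cons_self, h⟩
    · obtain ⟨x, hx, hxy⟩ := ih _ hy
      exact ⟨x, List.mem_cons_of_mem _ hx, hxy⟩

lemma forall₂_filter_flatten {P₂ : List (List (Fin (3*n) × Fin (3*m)))}
    {P : List (List (Fin n × Fin m))}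
    (h : List.Forall₂ (fun cs bs => cs.filter isCenter = bs.map centerOf) P₂ P) :
    (P₂.flatten).filter isCenter = (P.flatten).map centerOf := by
  induction h with
  | nil => simp
  | cons h _ ih =>
    simp only [List.flatten_cons, List.filter_append, List.map_append, h, ih]

lemma fwd {D : Set (List A)}
    (h : StrandsSolvable KingAdj (blowupGrid M) (blowupDict D)) :
    StrandsSolvable KingAdj M D := by
  obtain ⟨P₂, hP₂, hnd, hcov⟩ := h
  have key : ∀ cs ∈ P₂, ∃ bs : List (Fin n × Fin m),
      (∃ w ∈ D, IsPlacement KingAdj M w bs) ∧ cs.filter isCenter = bs.map centerOf := by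
    intro cs hcs
    obtain ⟨u, hu, hnodup, hchain, hspell⟩ := hP₂ cs hcs
    obtain ⟨w, hw, g, hglen, hgch, rfl⟩ := hu
    obtain ⟨bs, hbch, hbM, _, hbfilt, _⟩ := fwd_aux g w cs hglen hgch hspell hchain
    have hbnd : bs.Nodup := by
      have : (cs.filter isCenter).Nodup := hnodup.filter _
      rw [hbfilt] at this
      exact this.of_map
    exact ⟨bs, ⟨w, hw, hbnd, hbch, hbM⟩, hbfilt⟩
  obtain ⟨P, hF⟩ := exists_forall₂ P₂ key
  have hF2 : List.Forall₂ (fun cs bs => cs.filter isCenter = bs.map centerOf) P₂ P :=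
    hF.imp (fun _ _ h => h.2)
  refine ⟨P, ?_, ?_, ?_⟩
  · intro bs hbs
    obtain ⟨cs, _, hΦ⟩ := forall₂_mem hF bs hbs
    exact hΦ.1
  · have := forall₂_filter_flatten hF2
    have h2 : ((P.flatten).map centerOf).Nodup := this ▸ hnd.filter _
    exact h2.of_map
  · intro b
    have h1 : centerOf b ∈ (P₂.flatten).filter isCenter :=
      List.mem_filter.mpr ⟨hcov (centerOf b), isCenter_centerOf b⟩
    rw [forall₂_filter_flatten hF2] at h1
    obtain ⟨b', hb', he⟩ := List.mem_map.mp h1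
    rwa [← centerOf_injective he]

/-! ### Backward construction -/

def cornerLoc (e : Bool × Bool) : ℕ × ℕ := (if e.1 then 2 else 0, if e.2 then 2 else 0)

def applyFlip (e : Bool × Bool) (f : Bool) : Bool × Bool :=
  if f then (!e.1, e.2) else (e.1, !e.2)

def basePath (f : Bool) : List (ℕ × ℕ) :=
  if f then [(0,0),(0,1),(0,2),(1,2),(2,2),(2,1),(1,1),(1,0),(2,0)]
  else [(0,0),(1,0),(2,0),(2,1),(2,2),(1,2),(1,1),(0,1),(0,2)]

def loc (e : Bool × Bool) (p : ℕ × ℕ) : ℕ × ℕ :=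
  (if e.1 then 2 - p.1 else p.1, if e.2 then 2 - p.2 else p.2)

def localPath (e : Bool × Bool) (f : Bool) : List (ℕ × ℕ) := (basePath f).map (loc e)

def localOrth (p q : ℕ × ℕ) : Prop :=
  p.1 ≤ 2 ∧ p.2 ≤ 2 ∧ q.1 ≤ 2 ∧ q.2 ≤ 2 ∧
  ((p.1 = q.1 ∧ (p.2 = q.2 + 1 ∨ q.2 = p.2 + 1)) ∨
  (p.2 = q.2 ∧ (p.1 = q.1 + 1 ∨ q.1 = p.1 + 1)))

instance (p q : ℕ × ℕ) : Decidable (localOrth p q) :=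
  inferInstanceAs (Decidable (_ ∧ _ ∧ _ ∧ _ ∧
    ((p.1 = q.1 ∧ (p.2 = q.2 + 1 ∨ q.2 = p.2 + 1)) ∨
    (p.2 = q.2 ∧ (p.1 = q.1 + 1 ∨ q.1 = p.1 + 1)))))

lemma localPath_nodup (e : Bool × Bool) (f : Bool) : (localPath e f).Nodup := by
  obtain ⟨e1, e2⟩ := e
  cases e1 <;> cases e2 <;> cases f <;> decide

lemma localPath_chain (e : Bool × Bool) (f : Bool) : (localPath e f).Chain' localOrth := by
  obtain ⟨e1, e2⟩ := e
  cases e1 <;> cases e2 <;> cases f <;>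
    (simp [localPath, basePath, loc, List.Chain', List.isChain_cons_cons, localOrth]; try omega)

lemma localPath_bdd (e : Bool × Bool) (f : Bool) :
    ∀ p ∈ localPath e f, p.1 ≤ 2 ∧ p.2 ≤ 2 := by
  obtain ⟨e1, e2⟩ := e
  cases e1 <;> cases e2 <;> cases f <;> decide

lemma localPath_head (e : Bool × Bool) (f : Bool) :
    (localPath e f).head? = some (cornerLoc e) := by
  obtain ⟨e1, e2⟩ := e
  cases e1 <;> cases e2 <;> cases f <;> decide

lemma localPath_last (e : Bool × Bool) (f : Bool) :
    (localPath e f).getLast? = some (cornerLoc (applyFlip e f)) := by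
  obtain ⟨e1, e2⟩ := e
  cases e1 <;> cases e2 <;> cases f <;> decide

lemma localPath_mem_of (e : Bool × Bool) (f : Bool) {a b : ℕ} (ha : a ≤ 2) (hb : b ≤ 2) :
    (a, b) ∈ localPath e f := by
  obtain ⟨e1, e2⟩ := e
  interval_cases a <;> interval_cases b <;> cases e1 <;> cases e2 <;> cases f <;> decide

lemma localPath_map_spell {β : Type} (e : Bool × Bool) (f : Bool) (u v : β) :
    (localPath e f).map (fun p => if p = ((1:ℕ), (1:ℕ)) then u else v)
      = [v, v, v, v, v, v, u, v, v] := by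
  obtain ⟨e1, e2⟩ := e
  cases e1 <;> cases e2 <;> cases f <;> simp [localPath, basePath, loc, Prod.ext_iff]

def emb (b : Fin n × Fin m) (p : ℕ × ℕ) : Fin (3*n) × Fin (3*m) :=
  (⟨3*(b.1:ℕ) + min p.1 2, by have := b.1.isLt; omega⟩,
   ⟨3*(b.2:ℕ) + min p.2 2, by have := b.2.isLt; omega⟩)

lemma toBlock_emb (b : Fin n × Fin m) (p : ℕ × ℕ) : toBlock (emb b p) = b := by
  simp only [toBlock, emb, Prod.ext_iff, Fin.ext_iff, Fin.val_mk]
  omega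

lemma emb_inj (b : Fin n × Fin m) {p q : ℕ × ℕ} (hp1 : p.1 ≤ 2) (hp2 : p.2 ≤ 2)
    (hq1 : q.1 ≤ 2) (hq2 : q.2 ≤ 2) (h : emb b p = emb b q) : p = q := by
  simp only [emb, Prod.ext_iff, Fin.ext_iff, Fin.val_mk] at h ⊢
  omega

lemma emb_center (b : Fin n × Fin m) : emb b (1, 1) = centerOf b := by
  simp only [emb, centerOf, Prod.ext_iff, Fin.ext_iff, Fin.val_mk]
  omega

lemma grid_centerOf (b : Fin n × Fin m) :
    blowupGrid M (centerOf b).1 (centerOf b).2 = Sum.inl (M b.1 b.2) := by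
  simp [blowupGrid, centerOf, Nat.mul_add_mod, Nat.mul_add_div, Fin.eta]

lemma grid_noncenter {b : Fin n × Fin m} {a c : ℕ} (hp1 : a ≤ 2) (hp2 : c ≤ 2)
    (h : ¬(a = 1 ∧ c = 1)) :
    blowupGrid M (emb b (a, c)).1 (emb b (a, c)).2
      = Sum.inr (cellColor (b.1:ℕ) (b.2:ℕ)) := by
  have d1 : ((emb b (a, c)).1 : ℕ) / 3 = (b.1:ℕ) := by simp only [emb, Fin.val_mk]; omega
  have d2 : ((emb b (a, c)).2 : ℕ) / 3 = (b.2:ℕ) := by simp only [emb, Fin.val_mk]; omega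
  have hcond : ¬(((emb b (a, c)).1 : ℕ) % 3 = 1 ∧ ((emb b (a, c)).2 : ℕ) % 3 = 1) := by
    simp only [emb, Fin.val_mk]
    omega
  unfold blowupGrid
  rw [if_neg hcond, d1, d2]

lemma grid_emb {b : Fin n × Fin m} {p : ℕ × ℕ} (hp1 : p.1 ≤ 2) (hp2 : p.2 ≤ 2) :
    blowupGrid M (emb b p).1 (emb b p).2
      = if p = ((1:ℕ), (1:ℕ)) then Sum.inl (M b.1 b.2)
        else Sum.inr (cellColor (b.1:ℕ) (b.2:ℕ)) := by
  obtain ⟨a, c⟩ := p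
  by_cases h : a = 1 ∧ c = 1
  · obtain ⟨rfl, rfl⟩ := h
    rw [if_pos rfl, emb_center, grid_centerOf]
  · rw [if_neg (by simpa [Prod.ext_iff] using h), grid_noncenter hp1 hp2 h]

lemma orth_emb {b : Fin n × Fin m} {p q : ℕ × ℕ} (h : localOrth p q) :
    OrthAdj (emb b p) (emb b q) := by
  unfold OrthAdj localOrth at *
  simp only [emb, Fin.val_mk]
  omega

def exitFlip (e : Bool × Bool) (b b' : Fin n × Fin m) : Bool :=
  if (b.1:ℕ) ≠ (b'.1:ℕ) then
    (if e.1 = decide ((b.1:ℕ) < (b'.1:ℕ)) then false else true)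
  else (if e.2 = decide ((b.2:ℕ) < (b'.2:ℕ)) then true else false)

def entryNext (x : Bool × Bool) (b b' : Fin n × Fin m) : Bool × Bool :=
  if (b.1:ℕ) ≠ (b'.1:ℕ) then (!x.1, x.2) else (x.1, !x.2)

def buildPath (e : Bool × Bool) : List (Fin n × Fin m) → List (Fin (3*n) × Fin (3*m))
  | [] => []
  | [b] => (localPath e false).map (emb b)
  | b :: b' :: t =>
      (localPath e (exitFlip e b b')).map (emb b) ++
        buildPath (entryNext (applyFlip e (exitFlip e b b')) b b') (b' :: t)

lemma cross_adj (e : Bool × Bool) {b b' : Fin n × Fin m} (h : OrthAdj b b') :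
    OrthAdj (emb b (cornerLoc (applyFlip e (exitFlip e b b'))))
      (emb b' (cornerLoc (entryNext (applyFlip e (exitFlip e b b')) b b'))) := by
  unfold OrthAdj at h
  obtain ⟨e1, e2⟩ := e
  by_cases hv : (b.1:ℕ) ≠ (b'.1:ℕ)
  · rcases Nat.lt_or_ge (b.1:ℕ) (b'.1:ℕ) with hlt | hge
    · have hd : decide ((b.1:ℕ) < (b'.1:ℕ)) = true := by simpa using hlt
      cases e1 <;>
        simp [exitFlip, entryNext, applyFlip, cornerLoc, hv, hd, hlt] <;>
        · unfold OrthAdj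
          simp only [emb, Fin.val_mk]
          omega
    · have hd : decide ((b.1:ℕ) < (b'.1:ℕ)) = false := by simpa using hge
      have hd' : ¬((b.1:ℕ) < (b'.1:ℕ)) := by omega
      cases e1 <;>
        simp [exitFlip, entryNext, applyFlip, cornerLoc, hv, hd, hd'] <;>
        · unfold OrthAdj
          simp only [emb, Fin.val_mk]
          omega
  · rcases Nat.lt_or_ge (b.2:ℕ) (b'.2:ℕ) with hlt | hge
    · have hd : decide ((b.2:ℕ) < (b'.2:ℕ)) = true := by simpa using hlt
      cases e2 <;>
        simp [exitFlip, entryNext, applyFlip, cornerLoc, hv, hd, hlt] <;>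
        · unfold OrthAdj
          simp only [emb, Fin.val_mk]
          omega
    · have hd : decide ((b.2:ℕ) < (b'.2:ℕ)) = false := by simpa using hge
      have hd' : ¬((b.2:ℕ) < (b'.2:ℕ)) := by omega
      cases e2 <;>
        simp [exitFlip, entryNext, applyFlip, cornerLoc, hv, hd, hd'] <;>
        · unfold OrthAdj
          simp only [emb, Fin.val_mk]
          omega

lemma localPath_ne_nil (e : Bool × Bool) (f : Bool) : localPath e f ≠ [] := by
  cases f <;> simp [localPath, basePath]

lemma mapBlock_spell (b : Fin n × Fin m) (e : Bool × Bool) (f : Bool) :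
    ((localPath e f).map (emb b)).map (fun c => blowupGrid M c.1 c.2)
      = blowupW (cellColor (b.1:ℕ) (b.2:ℕ)) (M b.1 b.2) := by
  rw [List.map_map]
  have : ∀ p ∈ localPath e f,
      ((fun c : Fin (3*n) × Fin (3*m) => blowupGrid M c.1 c.2) ∘ emb b) p
        = if p = ((1:ℕ), (1:ℕ)) then Sum.inl (M b.1 b.2)
          else Sum.inr (cellColor (b.1:ℕ) (b.2:ℕ)) := by
    intro p hp
    exact grid_emb (localPath_bdd e f p hp).1 (localPath_bdd e f p hp).2
  rw [List.map_congr_left this, localPath_map_spell]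
  rfl

lemma buildPath_head : ∀ (bs : List (Fin n × Fin m)) (e : Bool × Bool),
    (buildPath e bs).head? = bs.head?.map (fun b => emb b (cornerLoc e))
  | [], _ => rfl
  | [b], e => by
    simp only [buildPath, List.head?_map, localPath_head, Option.map_some]
    rfl
  | b :: b' :: t, e => by
    rw [buildPath]
    rw [List.head?_append_of_ne_nil]
    · simp only [List.head?_map, localPath_head, Option.map_some]
      rfl
    · simp [localPath_ne_nil]
  
lemma buildPath_toBlock : ∀ (bs : List (Fin n × Fin m)) (e : Bool × Bool)
    {c : Fin (3*n) × Fin (3*m)}, c ∈ buildPath e bs → toBlock c ∈ bs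
  | [], _, _, h => by simp [buildPath] at h
  | [b], e, c, h => by
    rw [buildPath] at h
    obtain ⟨p, _, rfl⟩ := List.mem_map.mp h
    simp [toBlock_emb]
  | b :: b' :: t, e, c, h => by
    rw [buildPath] at h
    rcases List.mem_append.mp h with h | h
    · obtain ⟨p, _, rfl⟩ := List.mem_map.mp h
      simp [toBlock_emb]
    · exact List.mem_cons_of_mem _ (buildPath_toBlock (b' :: t) _ h)

lemma buildPath_cover : ∀ (bs : List (Fin n × Fin m)) (e : Bool × Bool)
    {b : Fin n × Fin m}, b ∈ bs → ∀ p : ℕ × ℕ, p.1 ≤ 2 → p.2 ≤ 2 →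
    emb b p ∈ buildPath e bs
  | [], _, _, h, _, _, _ => by simp at h
  | [b], e, b', hb, p, hp1, hp2 => by
    simp only [List.mem_singleton] at hb
    subst hb
    rw [buildPath]
    exact List.mem_map_of_mem (by obtain ⟨a, c⟩ := p; exact localPath_mem_of e false hp1 hp2)
  | b :: b' :: t, e, b'', hb, p, hp1, hp2 => by
    rw [buildPath]
    rcases List.mem_cons.mp hb with rfl | hb
    · exact List.mem_append_left _
        (List.mem_map_of_mem (by obtain ⟨a, c⟩ := p; exact localPath_mem_of _ _ hp1 hp2))
    · exact List.mem_append_right _ (buildPath_cover (b' :: t) _ hb p hp1 hp2)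

lemma buildPath_spell : ∀ (bs : List (Fin n × Fin m)) (e : Bool × Bool),
    (buildPath e bs).map (fun c => blowupGrid M c.1 c.2)
      = (List.zipWith blowupW (bs.map (fun b => cellColor (b.1:ℕ) (b.2:ℕ)))
          (bs.map (fun b => M b.1 b.2))).flatten
  | [], _ => rfl
  | [b], e => by
    rw [buildPath]
    simp only [List.map_cons, List.map_nil, List.zipWith_cons_cons, List.zipWith_nil_right,
      List.flatten_cons, List.flatten_nil, List.append_nil]
    exact mapBlock_spell b e false
  | b :: b' :: t, e => by
    rw [buildPath, List.map_append]
    rw [mapBlock_spell b e _, buildPath_spell (b' :: t) _]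
    simp

lemma buildPath_nodup : ∀ (bs : List (Fin n × Fin m)) (e : Bool × Bool),
    bs.Nodup → (buildPath e bs).Nodup
  | [], _, _ => List.nodup_nil
  | [b], e, _ => by
    rw [buildPath]
    refine List.Nodup.map_on ?_ (localPath_nodup e false)
    intro p hp q hq h
    exact emb_inj b (localPath_bdd _ _ p hp).1 (localPath_bdd _ _ p hp).2
      (localPath_bdd _ _ q hq).1 (localPath_bdd _ _ q hq).2 h
  | b :: b' :: t, e, hnd => by
    rw [buildPath]
    rw [List.nodup_append]
    refine ⟨?_, buildPath_nodup (b' :: t) _ (hnd.of_cons), ?_⟩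
    · refine List.Nodup.map_on ?_ (localPath_nodup e _)
      intro p hp q hq h
      exact emb_inj b (localPath_bdd _ _ p hp).1 (localPath_bdd _ _ p hp).2
        (localPath_bdd _ _ q hq).1 (localPath_bdd _ _ q hq).2 h
    · rintro c hc1 _ hc2 rfl
      obtain ⟨p, _, rfl⟩ := List.mem_map.mp hc1
      have h1 : toBlock (emb b p) ∈ b' :: t := buildPath_toBlock (b' :: t) _ hc2
      rw [toBlock_emb] at h1
      exact (List.nodup_cons.mp hnd).1 h1

lemma buildPath_chain : ∀ (bs : List (Fin n × Fin m)) (e : Bool × Bool),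
    bs.Chain' OrthAdj → (buildPath e bs).Chain' OrthAdj
  | [], _, _ => List.isChain_nil
  | [b], e, _ => by
    rw [buildPath]
    unfold List.Chain'
    rw [List.isChain_map]
    exact (localPath_chain e false).imp (fun _ _ h => orth_emb h)
  | b :: b' :: t, e, hch => by
    rw [buildPath]
    unfold List.Chain'
    rw [List.isChain_append]
    obtain ⟨hbb', hch'⟩ := List.isChain_cons_cons.mp hch
    refine ⟨?_, buildPath_chain (b' :: t) _ hch', ?_⟩
    · rw [List.isChain_map]
      exact (localPath_chain e _).imp (fun _ _ h => orth_emb h)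
    · intro x hx y hy
      rw [List.getLast?_map, localPath_last] at hx
      rw [buildPath_head] at hy
      simp only [List.head?_cons, Option.map_some, Option.mem_def, Option.some.injEq] at hx hy
      subst hx; subst hy
      exact cross_adj e hbb'

lemma orth_colorNext {b b' : Fin n × Fin m} (h : OrthAdj b b') :
    cellColor (b'.1:ℕ) (b'.2:ℕ) ∈ colorNext (cellColor (b.1:ℕ) (b.2:ℕ)) := by
  unfold OrthAdj at h
  have e1 : (b.1:ℕ) % 2 = 0 ∨ (b.1:ℕ) % 2 = 1 := by omega
  have e2 : (b.2:ℕ) % 2 = 0 ∨ (b.2:ℕ) % 2 = 1 := by omega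
  have e3 : (b'.1:ℕ) % 2 = 0 ∨ (b'.1:ℕ) % 2 = 1 := by omega
  have e4 : (b'.2:ℕ) % 2 = 0 ∨ (b'.2:ℕ) % 2 = 1 := by omega
  rcases e1 with h1|h1 <;> rcases e2 with h2|h2 <;> rcases e3 with h3|h3 <;>
    rcases e4 with h4|h4 <;> simp only [cellColor, h1, h2, h3, h4] <;>
    first
      | (exfalso; omega)
      | (norm_num; decide)

lemma bwd {D : Set (List A)} (h : StrandsSolvable OrthAdj M D) :
    StrandsSolvable OrthAdj (blowupGrid M) (blowupDict D) := by
  obtain ⟨P, hP, hnd, hcov⟩ := h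
  refine ⟨P.map (buildPath (false, false)), ?_, ?_, ?_⟩
  · intro cs hcs
    obtain ⟨bs, hbs, rfl⟩ := List.mem_map.mp hcs
    obtain ⟨w, hw, hbnd, hbch, hbM⟩ := hP bs hbs
    refine ⟨(List.zipWith blowupW (bs.map (fun b => cellColor (b.1:ℕ) (b.2:ℕ)))
        (bs.map (fun b => M b.1 b.2))).flatten, ?_, ?_, ?_, ?_⟩
    · refine ⟨w, hw, bs.map (fun b => cellColor (b.1:ℕ) (b.2:ℕ)), ?_, ?_, ?_⟩
      · rw [← hbM]; simp
      · unfold List.Chain'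
        rw [List.isChain_map]
        exact hbch.imp (fun _ _ hadj => orth_colorNext hadj)
      · rw [hbM]
    · exact buildPath_nodup bs _ hbnd
    · exact buildPath_chain bs _ hbch
    · exact buildPath_spell bs _
  · rw [List.nodup_flatten]
    constructor
    · intro l hl
      obtain ⟨bs, hbs, rfl⟩ := List.mem_map.mp hl
      exact buildPath_nodup bs _ (hP bs hbs).choose_spec.2.1
    · rw [List.pairwise_map]
      have hpw : P.Pairwise List.Disjoint := (List.nodup_flatten.mp hnd).2
      refine hpw.imp ?_
      intro bs bs' hdisj c hc1 hc2
      exact hdisj (buildPath_toBlock _ _ hc1) (buildPath_toBlock _ _ hc2)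
  · intro c
    have hb := hcov (toBlock c)
    obtain ⟨bs, hbs, hbc⟩ := List.mem_flatten.mp hb
    have hc : c = emb (toBlock c) ((c.1:ℕ) % 3, (c.2:ℕ) % 3) := by
      simp only [emb, toBlock, Prod.ext_iff, Fin.ext_iff, Fin.val_mk]
      omega
    rw [List.mem_flatten]
    refine ⟨buildPath (false, false) bs, List.mem_map_of_mem hbs, ?_⟩
    rw [hc]
    exact buildPath_cover bs _ hbc _ (by omega) (by omega)

lemma orth_le_king {c d : Fin n × Fin m} (h : OrthAdj c d) : KingAdj c d := by
  unfold OrthAdj at h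
  refine ⟨?_, by omega, by omega⟩
  rintro rfl
  omega

lemma solvable_mono {adj adj' : (Fin n × Fin m) → (Fin n × Fin m) → Prop}
    {D : Set (List A)} (hmono : ∀ c d, adj c d → adj' c d)
    (h : StrandsSolvable adj M D) : StrandsSolvable adj' M D := by
  obtain ⟨P, hP, hnd, hcov⟩ := h
  refine ⟨P, ?_, hnd, hcov⟩
  intro cs hcs
  obtain ⟨w, hw, h1, h2, h3⟩ := hP cs hcs
  exact ⟨w, hw, h1, h2.imp hmono, h3⟩

end SB

/-- Blowing up a Strands instance: if the instance `I = (A, D, M)` is solvable only if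
it is solvable without diagonal moves, then the blown-up instance `I₂` is solvable iff
`I` is, and moreover if `I₂` is solvable then it is solvable without diagonal moves. -/
theorem strands_blowup {n m : ℕ} {A : Type}
    (M : Fin n → Fin m → A) (D : Set (List A)) (hD : ∀ w ∈ D, w ≠ [])
    (hI : StrandsSolvable KingAdj M D → StrandsSolvable OrthAdj M D) :
    (StrandsSolvable KingAdj (blowupGrid M) (blowupDict D) ↔
      StrandsSolvable KingAdj M D) ∧
    (StrandsSolvable KingAdj (blowupGrid M) (blowupDict D) →
      StrandsSolvable OrthAdj (blowupGrid M) (blowupDict D)) := by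
  refine ⟨⟨fun h => SB.fwd h, fun h => ?_⟩, fun h => SB.bwd (hI (SB.fwd h))⟩
  exact SB.solvable_mono (fun _ _ => SB.orth_le_king) (SB.bwd (hI h))
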